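/- Let Ω ⊂ ℝ³ be open and bounded, let ε_k → 0, and let E ⊂ ℝ³ be a measurable (0,1)³-periodic set with |E ∩ (0,1)³| = θ ∈ (0,1). Suppose f_k, g_k ∈ L¹(Ω) with f_k = g_k almost everywhere on Ω ∩ ε_k E, and suppose f_k → f and g_k → g in L¹(Ω). Then f = g almost everywhere in Ω. -/

import Mathlib

open MeasureTheory Filter Topology Pointwise ENNReal

noncomputable section

/-- The half-open unit cube `(0,1)³` (open version). -/
def unitCube : Set (Fin 3 → ℝ) := Set.univ.pi fun _ => Set.Ioo (0 : ℝ) 1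

/-- Uniqueness of limits in the sense of extensions: if `f_k = g_k` a.e. on `Ω ∩ ε_k E`
for a periodic set `E` of positive cell density, and `f_k → f`, `g_k → g` in `L¹(Ω)`,
then `f = g` a.e. in `Ω`. -/
def cellZ (z : Fin 3 → ℤ) : Set (Fin 3 → ℝ) :=
  Set.univ.pi fun i => Set.Ico (z i : ℝ) (z i + 1)


/-- half-open unit cell at integer point z, scaled by ε -/
def cell (ε : ℝ) (z : Fin 3 → ℤ) : Set (Fin 3 → ℝ) :=
  Set.univ.pi fun i => Set.Ico (ε * z i) (ε * (z i + 1))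

lemma mem_cell {ε : ℝ} (hε : 0 < ε) {z : Fin 3 → ℤ} {x : Fin 3 → ℝ} :
    x ∈ cell ε z ↔ ∀ i, (z i : ℝ) ≤ x i / ε ∧ x i / ε < z i + 1 := by
  simp only [cell, Set.mem_pi, Set.mem_univ, Set.mem_Ico, forall_true_left]
  refine forall_congr' fun i => ?_
  rw [le_div_iff₀ hε, div_lt_iff₀ hε, mul_comm (ε) ((z i:ℝ)), mul_comm ε]

lemma cell_cover {ε : ℝ} (hε : 0 < ε) (x : Fin 3 → ℝ) :
    x ∈ cell ε (fun i => ⌊x i / ε⌋) := by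
  rw [mem_cell hε]
  intro i
  exact ⟨Int.floor_le _, by push_cast; exact Int.lt_floor_add_one _⟩

lemma cell_eq_of_mem {ε : ℝ} (hε : 0 < ε) {z z' : Fin 3 → ℤ} {x : Fin 3 → ℝ}
    (h : x ∈ cell ε z) (h' : x ∈ cell ε z') : z = z' := by
  rw [mem_cell hε] at h h'
  funext i
  have h1 := (h i); have h2 := (h' i)
  have e1 : ⌊x i / ε⌋ = z i := Int.floor_eq_iff.2 ⟨h1.1, by exact_mod_cast h1.2⟩
  have e2 : ⌊x i / ε⌋ = z' i := Int.floor_eq_iff.2 ⟨h2.1, by exact_mod_cast h2.2⟩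
  rw [← e1, e2]

lemma cell_disjoint {ε : ℝ} (hε : 0 < ε) : Pairwise (Function.onFun Disjoint (cell ε)) := by
  intro z z' hzz
  rw [Function.onFun, Set.disjoint_left]
  intro x hx hx'
  exact hzz (cell_eq_of_mem hε hx hx')

lemma measurable_cell (ε : ℝ) (z : Fin 3 → ℤ) : MeasurableSet (cell ε z) :=
  MeasurableSet.univ_pi fun i => measurableSet_Ico

lemma volume_cell {ε : ℝ} (hε : 0 < ε) (z : Fin 3 → ℤ) :
    volume (cell ε z) = ENNReal.ofReal (ε ^ 3) := by
  rw [cell, volume_pi_pi]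
  have : ∀ i : Fin 3, volume (Set.Ico (ε * z i) (ε * (z i + 1))) = ENNReal.ofReal ε := by
    intro i
    rw [Real.volume_Ico]
    congr 1
    ring
  simp [this, Finset.prod_const, ← ENNReal.ofReal_pow hε.le]

lemma diam_cell {ε : ℝ} (hε : 0 < ε) {z : Fin 3 → ℤ} {x y : Fin 3 → ℝ}
    (hx : x ∈ cell ε z) (hy : y ∈ cell ε z) : dist x y < ε := by
  rw [dist_pi_lt_iff hε]
  intro i
  simp only [cell, Set.mem_pi, Set.mem_univ, Set.mem_Ico, forall_true_left] at hx hy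
  have h1 := hx i; have h2 := hy i
  rw [Real.dist_eq, abs_lt]
  constructor <;> nlinarith [h1.1, h1.2, h2.1, h2.2]

lemma finrank_pi3 : Module.finrank ℝ (Fin 3 → ℝ) = 3 := by
  simp [Module.finrank_pi]

lemma smul_cellZ {ε : ℝ} (hε : 0 < ε) (z : Fin 3 → ℤ) : ε • cellZ z = cell ε z := by
  ext x
  rw [Set.mem_smul_set_iff_inv_smul_mem₀ hε.ne']
  simp only [cellZ, cell, Set.mem_pi, Set.mem_univ, Set.mem_Ico, forall_true_left,
    Pi.smul_apply, smul_eq_mul]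
  refine forall_congr' fun i => ?_
  rw [inv_mul_eq_div, le_div_iff₀ hε, div_lt_iff₀ hε, mul_comm ((z i:ℝ)) ε, mul_comm ((z i:ℝ)+1) ε]

lemma hyperplane_null (i : Fin 3) : volume {x : Fin 3 → ℝ | x i = 0} = 0 := by
  have : {x : Fin 3 → ℝ | x i = 0} = Set.univ.pi fun j => if j = i then ({0} : Set ℝ) else Set.univ := by
    ext x
    simp only [Set.mem_setOf_eq, Set.mem_pi, Set.mem_univ, forall_true_left]
    constructor
    · intro h j; split <;> simp_all
    · intro h; have := h i; simp_all
  rw [this, volume_pi_pi]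
  rw [Finset.prod_eq_zero (Finset.mem_univ i)]
  simp

-- volume of E in the half-open cube ≥ θ
lemma vol_E_cellZ0 {E : Set (Fin 3 → ℝ)} {θ : ℝ}
    (hEθ : volume (E ∩ unitCube) = ENNReal.ofReal θ) :
    ENNReal.ofReal θ ≤ volume (E ∩ cellZ 0) := by
  rw [← hEθ]
  apply measure_mono
  apply Set.inter_subset_inter_right
  intro x hx
  simp only [unitCube, cellZ, Set.mem_pi, Set.mem_univ, Set.mem_Ioo, Set.mem_Ico,
    forall_true_left, Pi.zero_apply, Int.cast_zero] at hx ⊢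
  intro i
  exact ⟨(hx i).1.le, by simpa using (hx i).2⟩

lemma E_inter_cellZ {E : Set (Fin 3 → ℝ)}
    (hEper : ∀ t : Fin 3 → ℤ, ∀ x, x ∈ E ↔ (x + fun i => (t i : ℝ)) ∈ E) (z : Fin 3 → ℤ) :
    E ∩ cellZ z = (fun i => (z i : ℝ)) +ᵥ (E ∩ cellZ 0) := by
  ext y
  rw [Set.mem_vadd_set_iff_neg_vadd_mem]
  have keyE : (-(fun i => (z i:ℝ)) +ᵥ y) ∈ E ↔ y ∈ E := by
    rw [(hEper z (-(fun i => (z i:ℝ)) +ᵥ y))]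
    constructor <;> intro h <;> [skip; skip] <;>
      · convert h using 2 <;> funext i <;> simp [vadd_eq_add] <;> ring
  constructor
  · rintro ⟨hE, hc⟩
    refine ⟨?_, ?_⟩
    · rw [keyE]; exact hE
    · simp only [cellZ, Set.mem_pi, Set.mem_univ, Set.mem_Ico, forall_true_left] at hc ⊢
      intro i
      have := hc i
      simp only [vadd_eq_add, Pi.add_apply, Pi.neg_apply, Pi.zero_apply, Int.cast_zero]
      constructor <;> [linarith [this.1]; linarith [this.2]]
  · rintro ⟨hE, hc⟩
    refine ⟨keyE.1 hE, ?_⟩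
    simp only [cellZ, Set.mem_pi, Set.mem_univ, Set.mem_Ico, forall_true_left,
      vadd_eq_add, Pi.add_apply, Pi.neg_apply, Pi.zero_apply, Int.cast_zero] at hc ⊢
    intro i
    have := hc i
    constructor <;> [linarith [this.1]; linarith [this.2]]

lemma vol_cell_inter {E : Set (Fin 3 → ℝ)} {θ ε : ℝ} (hε : 0 < ε)
    (hEper : ∀ t : Fin 3 → ℤ, ∀ x, x ∈ E ↔ (x + fun i => (t i : ℝ)) ∈ E)
    (hEθ : volume (E ∩ unitCube) = ENNReal.ofReal θ) (z : Fin 3 → ℤ) :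
    ENNReal.ofReal θ * ENNReal.ofReal (ε ^ 3) ≤ volume (cell ε z ∩ ε • E) := by
  have h1 : cell ε z ∩ ε • E = ε • (E ∩ cellZ z) := by
    rw [Set.smul_set_inter₀ hε.ne', smul_cellZ hε, Set.inter_comm]
  rw [h1, Measure.addHaar_smul_of_nonneg volume hε.le, finrank_pi3,
    E_inter_cellZ hEper z, measure_vadd]
  rw [mul_comm]
  exact mul_le_mul_right (vol_E_cellZ0 hEθ) _

lemma measurableSet_smul_of_ne {E : Set (Fin 3 → ℝ)} (hEm : MeasurableSet E) {ε : ℝ}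
    (hε : ε ≠ 0) : MeasurableSet (ε • E) := by
  rw [← Set.preimage_smul_inv₀ hε]
  exact (measurable_const_smul ε⁻¹) hEm

lemma key_lower {U K E : Set (Fin 3 → ℝ)} (hEm : MeasurableSet E)
    (hEper : ∀ t : Fin 3 → ℤ, ∀ x, x ∈ E ↔ (x + fun i => (t i : ℝ)) ∈ E)
    {θ : ℝ} (hEθ : volume (E ∩ unitCube) = ENNReal.ofReal θ)
    {δ ε : ℝ} (hthick : Metric.thickening δ K ⊆ U) (hε : 0 < ε) (hεδ : ε < δ) :
    ENNReal.ofReal θ * volume K ≤ volume (U ∩ ε • E) := by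
  set Z : Set (Fin 3 → ℤ) := {z | (cell ε z ∩ K).Nonempty} with hZ
  have hcellU : ∀ z ∈ Z, cell ε z ⊆ U := by
    rintro z ⟨y, hyc, hyK⟩ x hx
    exact hthick (Metric.mem_thickening_iff.2 ⟨y, hyK, (diam_cell hε hx hyc).trans hεδ⟩)
  have hKcover : K ⊆ ⋃ z ∈ Z, cell ε z := by
    intro x hx
    refine Set.mem_biUnion (show (fun i => ⌊x i / ε⌋) ∈ Z from ⟨x, cell_cover hε x, hx⟩)
      (cell_cover hε x)
  have hZc : Z.Countable := Set.to_countable Z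
  have hEsm : MeasurableSet (ε • E) := measurableSet_smul_of_ne hEm hε.ne'
  have hd1 : Z.PairwiseDisjoint (cell ε) := fun a _ b _ hab => cell_disjoint hε hab
  have hd2 : Z.PairwiseDisjoint (fun z => cell ε z ∩ ε • E) := fun a ha b hb hab =>
    Disjoint.mono Set.inter_subset_left Set.inter_subset_left (hd1 ha hb hab)
  calc ENNReal.ofReal θ * volume K
      ≤ ENNReal.ofReal θ * volume (⋃ z ∈ Z, cell ε z) :=
        mul_le_mul_right (measure_mono hKcover) _
    _ = ENNReal.ofReal θ * ∑' z : Z, volume (cell ε z) := by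
        rw [measure_biUnion hZc hd1 fun z _ => measurable_cell ε z]
    _ = ∑' z : Z, ENNReal.ofReal θ * volume (cell ε z) := ENNReal.tsum_mul_left.symm
    _ ≤ ∑' z : Z, volume (cell ε (z : Fin 3 → ℤ) ∩ ε • E) := by
        refine ENNReal.tsum_le_tsum fun z => ?_
        rw [volume_cell hε]
        exact vol_cell_inter hε hEper hEθ z
    _ = volume (⋃ z ∈ Z, (cell ε z ∩ ε • E)) :=
        (measure_biUnion hZc hd2 fun z _ => (measurable_cell ε z).inter hEsm).symm
    _ ≤ volume (U ∩ ε • E) := by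
        refine measure_mono (Set.iUnion₂_subset fun z hz => ?_)
        exact Set.inter_subset_inter_left _ (hcellU z hz)

theorem limits_agree_of_eq_on_periodic_set
    (Ω : Set (Fin 3 → ℝ)) (hΩo : IsOpen Ω) (hΩb : Bornology.IsBounded Ω)
    (ε : ℕ → ℝ) (hεpos : ∀ k, 0 < ε k) (hε : Tendsto ε atTop (𝓝 0))
    (E : Set (Fin 3 → ℝ)) (hEm : MeasurableSet E)
    (hEper : ∀ t : Fin 3 → ℤ, ∀ x, x ∈ E ↔ (x + fun i => (t i : ℝ)) ∈ E)
    (θ : ℝ) (hθ : 0 < θ) (hθ1 : θ < 1)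
    (hEθ : volume (E ∩ unitCube) = ENNReal.ofReal θ)
    (f g : ℕ → (Fin 3 → ℝ) → ℝ) (flim glim : (Fin 3 → ℝ) → ℝ)
    (hfint : ∀ k, IntegrableOn (f k) Ω) (hgint : ∀ k, IntegrableOn (g k) Ω)
    (hflim : IntegrableOn flim Ω) (hglim : IntegrableOn glim Ω)
    (heq : ∀ k, ∀ᵐ x ∂(volume.restrict (Ω ∩ ε k • E)), f k x = g k x)
    (hfconv : Tendsto (fun k => ∫ x in Ω, |f k x - flim x|) atTop (𝓝 0))
    (hgconv : Tendsto (fun k => ∫ x in Ω, |g k x - glim x|) atTop (𝓝 0)) :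
    ∀ᵐ x ∂(volume.restrict Ω), flim x = glim x := by
  have hΩm : MeasurableSet Ω := hΩo.measurableSet
  set μ := volume.restrict Ω with hμ
  -- measurable representatives
  set φ : (Fin 3 → ℝ) → ℝ := hflim.1.mk flim with hφdef
  set ψ : (Fin 3 → ℝ) → ℝ := hglim.1.mk glim with hψdef
  have hφm : Measurable φ := hflim.1.stronglyMeasurable_mk.measurable
  have hψm : Measurable ψ := hglim.1.stronglyMeasurable_mk.measurable
  have hφe : flim =ᵐ[μ] φ := hflim.1.ae_eq_mk
  have hψe : glim =ᵐ[μ] ψ := hglim.1.ae_eq_mk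
  set h' : (Fin 3 → ℝ) → ℝ := fun x => |φ x - ψ x| with hh'def
  have hh'm : Measurable h' := (hφm.sub hψm).abs
  -- h' integrable on Ω
  have hh : IntegrableOn (fun x => |flim x - glim x|) Ω := (hflim.sub hglim).abs
  have hh'e : (fun x => |flim x - glim x|) =ᵐ[μ] h' := by
    filter_upwards [hφe, hψe] with x h1 h2
    simp [hh'def, h1, h2]
  have hh'int : IntegrableOn h' Ω := hh.congr hh'e
  -- the main quantity
  set T : ℕ → ℝ := fun k => ∫ x in Ω ∩ ε k • E, h' x with hTdef
  have hT0 : ∀ k, 0 ≤ T k := fun k => integral_nonneg fun x => abs_nonneg _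
  have hTle : ∀ k, T k ≤ (∫ x in Ω, |f k x - flim x|) + ∫ x in Ω, |g k x - glim x| := by
    intro k
    have hsub : Ω ∩ ε k • E ⊆ Ω := Set.inter_subset_left
    have hintk : IntegrableOn (fun x => |f k x - flim x| + |g k x - glim x|) Ω :=
      ((hfint k).sub hflim).abs.add ((hgint k).sub hglim).abs
    have step1 : T k ≤ ∫ x in Ω ∩ ε k • E, (|f k x - flim x| + |g k x - glim x|) := by
      refine integral_mono_ae (hh'int.mono_set hsub) (hintk.mono_set hsub) ?_
      have h1 := ae_restrict_of_ae_restrict_of_subset hsub hφe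
      have h2 := ae_restrict_of_ae_restrict_of_subset hsub hψe
      filter_upwards [heq k, h1, h2] with x hfg e1 e2
      have : |φ x - ψ x| = |flim x - glim x| := by rw [e1, e2]
      rw [hh'def]; dsimp only
      rw [this]
      calc |flim x - glim x| = |(flim x - f k x) + (g k x - glim x)| := by rw [hfg]; ring_nf
        _ ≤ |flim x - f k x| + |g k x - glim x| := abs_add_le _ _
        _ = |f k x - flim x| + |g k x - glim x| := by rw [abs_sub_comm]
    have step2 : (∫ x in Ω ∩ ε k • E, (|f k x - flim x| + |g k x - glim x|))
        ≤ ∫ x in Ω, (|f k x - flim x| + |g k x - glim x|) := by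
      refine setIntegral_mono_set hintk ?_ (HasSubset.Subset.eventuallyLE hsub)
      exact Filter.Eventually.of_forall fun x => by positivity
    have step3 : (∫ x in Ω, (|f k x - flim x| + |g k x - glim x|))
        = (∫ x in Ω, |f k x - flim x|) + ∫ x in Ω, |g k x - glim x| :=
      integral_add ((hfint k).sub hflim).abs ((hgint k).sub hglim).abs
    linarith [step1, step2, step3.le, step3.ge]
  have hTtend : Tendsto T atTop (𝓝 0) := by
    have := hfconv.add hgconv
    rw [add_zero] at this
    exact squeeze_zero hT0 hTle this
  -- suffices to show h' = 0 a.e.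
  suffices hsuff : ∀ᵐ x ∂μ, h' x = 0 by
    filter_upwards [hφe, hψe, hsuff] with x e1 e2 e3
    rw [e1, e2]
    have := abs_eq_zero.1 e3
    linarith
  by_contra hcon
  -- find δ-level set of positive measure
  have hpos : μ {x | h' x ≠ 0} ≠ 0 := by
    intro h0
    exact hcon (by filter_upwards [measure_eq_zero_iff_ae_notMem.1 h0] with x hx; simpa using hx)
  have hUnion : {x | h' x ≠ 0} ⊆ ⋃ n : ℕ, {x | 1 / (n + 1 : ℝ) ≤ h' x} := by
    intro x hx
    have hxpos : 0 < h' x := lt_of_le_of_ne (abs_nonneg _) (Ne.symm hx)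
    obtain ⟨n, hn⟩ := exists_nat_one_div_lt hxpos
    exact Set.mem_iUnion.2 ⟨n, hn.le⟩
  obtain ⟨n, hn⟩ : ∃ n : ℕ, μ {x | 1 / (n + 1 : ℝ) ≤ h' x} ≠ 0 := by
    by_contra hno
    push_neg at hno
    exact hpos (measure_mono_null hUnion (by simpa using measure_iUnion_null hno))
  set δ : ℝ := 1 / (n + 1 : ℝ) with hδdef
  have hδpos : 0 < δ := by positivity
  -- the level set
  set S : Set (Fin 3 → ℝ) := Ω ∩ {x | δ ≤ h' x} with hSdef
  have hSm : MeasurableSet S := hΩm.inter (measurableSet_le measurable_const hh'm)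
  have hSvol : volume S ≠ 0 := by
    rw [hSdef, Set.inter_comm, ← Measure.restrict_apply' hΩm]
    exact hn
  have hSfin : volume S ≠ ⊤ :=
    ((measure_mono Set.inter_subset_left).trans_lt hΩb.measure_lt_top).ne
  -- compact subset of positive measure
  obtain ⟨K, hKS, hKc, hKlt⟩ := hSm.exists_isCompact_lt_add hSfin (ε := volume S) hSvol
  have hK0 : volume K ≠ 0 := by
    intro h0
    rw [h0, zero_add] at hKlt
    exact lt_irrefl _ hKlt
  have hKfin : volume K ≠ ⊤ := hKc.measure_lt_top.ne
  set P : ℝ≥0∞ := ENNReal.ofReal θ * volume K with hPdef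
  have hP0 : P ≠ 0 := by
    simp only [hPdef, mul_ne_zero_iff]
    exact ⟨by simp [ENNReal.ofReal_eq_zero, not_le, hθ], hK0⟩
  have hPfin : P ≠ ⊤ := ENNReal.mul_ne_top ENNReal.ofReal_ne_top hKfin
  have hP2 : P / 2 ≠ 0 := by simp [ENNReal.div_eq_zero_iff, hP0]
  have hP2fin : P / 2 ≠ ⊤ := by simp [ENNReal.div_eq_top, hPfin]
  -- outer approximation by open set
  obtain ⟨U, hKU, hUo, hUlt⟩ := Set.exists_isOpen_lt_add K hKfin hP2
  have hUdiff : volume (U \ K) < P / 2 :=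
    measure_diff_lt_of_lt_add hKc.measurableSet.nullMeasurableSet hKU hKfin hUlt
  -- thickening
  obtain ⟨δ₀, hδ₀pos, hthick⟩ := hKc.exists_thickening_subset_open hUo hKU
  -- eventually small ε
  have hev : ∀ᶠ k in atTop, ε k < δ₀ := hε.eventually (gt_mem_nhds hδ₀pos)
  -- the contradiction
  have clow : 0 < δ * (P / 2).toReal :=
    mul_pos hδpos (ENNReal.toReal_pos hP2 hP2fin)
  have hevT : ∀ᶠ k in atTop, T k < δ * (P / 2).toReal :=
    hTtend.eventually (gt_mem_nhds clow)
  obtain ⟨k, hk1, hk2⟩ := (hev.and hevT).exists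
  -- lower bound for T k
  have hkey : P ≤ volume (U ∩ ε k • E) := key_lower hEm hEper hEθ hthick (hεpos k) hk1
  have hsplit : volume (U ∩ ε k • E) ≤ volume (K ∩ ε k • E) + volume (U \ K) := by
    refine (measure_mono ?_).trans (measure_union_le _ _)
    intro x ⟨hxU, hxE⟩
    by_cases hxK : x ∈ K
    · exact Or.inl ⟨hxK, hxE⟩
    · exact Or.inr ⟨hxU, hxK⟩
  have hKE : P / 2 ≤ volume (K ∩ ε k • E) := by
    have : P / 2 + P / 2 ≤ volume (K ∩ ε k • E) + P / 2 := by
      rw [ENNReal.add_halves]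
      exact hkey.trans (hsplit.trans (add_le_add_right hUdiff.le _))
    exact (ENNReal.add_le_add_iff_right hP2fin).1 this
  have hKEfin : volume (K ∩ ε k • E) ≠ ⊤ :=
    ((measure_mono Set.inter_subset_left).trans_lt hKc.measure_lt_top).ne
  have hKEm : MeasurableSet (K ∩ ε k • E) :=
    hKc.measurableSet.inter (measurableSet_smul_of_ne hEm (hεpos k).ne')
  have hKsub : K ∩ ε k • E ⊆ Ω ∩ ε k • E :=
    Set.inter_subset_inter_left _ (hKS.trans Set.inter_subset_left)
  have hlow1 : δ * (volume (K ∩ ε k • E)).toReal ≤ ∫ x in K ∩ ε k • E, h' x := by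
    refine setIntegral_ge_of_const_le_real hKEm hKEfin ?_ (hh'int.mono_set (hKsub.trans Set.inter_subset_left))
    intro x hx
    exact (hKS hx.1).2
  have hlow2 : (∫ x in K ∩ ε k • E, h' x) ≤ T k := by
    refine setIntegral_mono_set (hh'int.mono_set Set.inter_subset_left) ?_
      (HasSubset.Subset.eventuallyLE hKsub)
    exact Filter.Eventually.of_forall fun x => abs_nonneg _
  have hlow3 : δ * (P / 2).toReal ≤ δ * (volume (K ∩ ε k • E)).toReal := by
    refine mul_le_mul_of_nonneg_left ?_ hδpos.le
    exact ENNReal.toReal_le_toReal hP2fin hKEfin |>.2 hKE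
  linarith [hlow1, hlow2, hlow3, hk2]
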